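/- arXiv:2507.07702 — 3 statements merged into one kernel-verified Lean document; each statement's English description precedes it below -/
import Mathlib

section
/- Let G be a finite connected graph with edge weights η : E → ℝ such that all spanning trees of G have pairwise distinct total weights Σ_{e∈T} η(e). Let T₁ and T₂ be the spanning trees with the smallest and the second smallest total weight, respectively. Then T₁ and T₂ differ by exactly one edge, i.e. |E(T₂) \ E(T₁)| = 1. -/
open MeasureTheory Finset

attribute [local instance] Classical.propDecidable

noncomputable section RSTRECore

variable {V : Type*} [Fintype V] [DecidableEq V]

/-- `T` is a spanning tree of `G`: a subgraph (on the same vertex set) that is a tree. -/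
def IsSpanningTree (G T : SimpleGraph V) : Prop := T ≤ G ∧ T.IsTree

/-- The Hamiltonian `H(T, ω) = Σ_{e ∈ T} ω_e`. -/
def Ham (T : SimpleGraph V) (ω : Sym2 V → ℝ) : ℝ := ∑ e ∈ T.edgeFinset, ω e

/-- Gibbs weight of a spanning tree: `∏_{e ∈ T} exp(-β ω_e)`. -/
def treeGibbsWeight (β : ℝ) (ω : Sym2 V → ℝ) (T : SimpleGraph V) : ℝ :=
  ∏ e ∈ T.edgeFinset, Real.exp (-β * ω e)

/-- Quenched law of the RSTRE: probability that the random spanning tree of `G`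
(with weights `exp(-β ω_e)`) lies in the set `A`. -/
def quenchedP (G : SimpleGraph V) (β : ℝ) (ω : Sym2 V → ℝ) (A : Set (SimpleGraph V)) : ℝ :=
  (∑ T ∈ univ.filter (fun T => IsSpanningTree G T ∧ T ∈ A), treeGibbsWeight β ω T) /
    (∑ T ∈ univ.filter (fun T => IsSpanningTree G T), treeGibbsWeight β ω T)

/-- Quenched expectation of an observable of the RSTRE. -/
def quenchedE (G : SimpleGraph V) (β : ℝ) (ω : Sym2 V → ℝ) (f : SimpleGraph V → ℝ) : ℝ :=
  (∑ T ∈ univ.filter (fun T => IsSpanningTree G T), treeGibbsWeight β ω T * f T) /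
    (∑ T ∈ univ.filter (fun T => IsSpanningTree G T), treeGibbsWeight β ω T)

/-- The law of the i.i.d. environment `(ω_e)` with marginal `μ`. -/
def envMeasure (μ : Measure ℝ) : Measure (Sym2 V → ℝ) := Measure.pi fun _ => μ

/-- Averaged (annealed) law of the RSTRE, for an event which may also depend on the
environment. -/
def avgP (μ : Measure ℝ) (G : SimpleGraph V) (β : ℝ)
    (A : (Sym2 V → ℝ) → Set (SimpleGraph V)) : ℝ :=
  ∫ ω, quenchedP G β ω (A ω) ∂(envMeasure μ)

/-- Averaged (annealed) expectation of an observable of environment and tree. -/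
def avgE (μ : Measure ℝ) (G : SimpleGraph V) (β : ℝ)
    (f : (Sym2 V → ℝ) → SimpleGraph V → ℝ) : ℝ :=
  ∫ ω, quenchedE G β ω (f ω) ∂(envMeasure μ)

/-- Diameter of a graph: the maximal graph distance between two vertices. -/
def gdiam (G : SimpleGraph V) : ℕ :=
  (Finset.univ : Finset (V × V)).sup fun p => G.dist p.1 p.2

/-- Volume of a vertex set: the sum of the degrees. -/
def gvol (G : SimpleGraph V) (S : Finset V) : ℕ := ∑ v ∈ S, G.degree v

/-- Number of edges between `S` and its complement. -/
def cutCard (G : SimpleGraph V) (S : Finset V) : ℕ :=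
  (univ.filter fun p : V × V => p.1 ∈ S ∧ p.2 ∉ S ∧ G.Adj p.1 p.2).card

/-- Edge expansion of a vertex set `S`. -/
def edgeExpansion (G : SimpleGraph V) (S : Finset V) : ℝ :=
  (cutCard G S : ℝ) / min (gvol G S : ℝ) (gvol G Sᶜ : ℝ)

/-- `G` is a `b`-expander: every nonempty proper vertex set has edge expansion at least `b`. -/
def IsExpander (G : SimpleGraph V) (b : ℝ) : Prop :=
  ∀ S : Finset V, S.Nonempty → S ≠ univ → b ≤ edgeExpansion G S

/-- The generalized inverse CDF `F_μ⁻¹(p) = inf { t | F_μ(t) ≥ p }`. -/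
def invCDF (μ : Measure ℝ) (p : ℝ) : ℝ := sInf {t : ℝ | p ≤ (μ (Set.Iic t)).toReal}

/-- Assumption (A): `μ` is supported on `[0,∞)` and its CDF satisfies
`F_μ(t) = c_μ t^α` for `0 ≤ t ≤ ρ`. -/
def AssumptionA (μ : Measure ℝ) (α : ℝ) : Prop :=
  0 < α ∧ μ (Set.Iio 0) = 0 ∧
    ∃ cμ > (0:ℝ), ∃ ρ > (0:ℝ), ∀ t : ℝ, 0 ≤ t → t ≤ ρ →
      (μ (Set.Iic t)).toReal = cμ * t ^ α

end RSTRECore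


section AuxExchange
open SimpleGraph

variable {V : Type*}

/-- Splitting a walk at a (possibly present) edge `s(x,y)`. -/
private lemma aux_split {H : SimpleGraph V} {x y : V} {u v : V} (p : H.Walk u v) :
    (H \ SimpleGraph.fromEdgeSet {s(x, y)}).Reachable u v ∨
      ((H \ SimpleGraph.fromEdgeSet {s(x, y)}).Reachable u x ∧
        (H \ SimpleGraph.fromEdgeSet {s(x, y)}).Reachable y v) ∨
      ((H \ SimpleGraph.fromEdgeSet {s(x, y)}).Reachable u y ∧
        (H \ SimpleGraph.fromEdgeSet {s(x, y)}).Reachable x v) := by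
  induction p with
  | nil => exact Or.inl (Reachable.refl _)
  | @cons u c w h p ih =>
    by_cases hg : s(u, c) = s(x, y)
    · rw [Sym2.eq_iff] at hg
      rcases hg with ⟨rfl, rfl⟩ | ⟨rfl, rfl⟩
      · rcases ih with h1 | ⟨h1, h2⟩ | ⟨h1, h2⟩
        · exact Or.inr (Or.inl ⟨Reachable.refl _, h1⟩)
        · exact Or.inr (Or.inl ⟨Reachable.refl _, h2⟩)
        · exact Or.inl h2
      · rcases ih with h1 | ⟨h1, h2⟩ | ⟨h1, h2⟩
        · exact Or.inr (Or.inr ⟨Reachable.refl _, h1⟩)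
        · exact Or.inl h2
        · exact Or.inr (Or.inr ⟨Reachable.refl _, h2⟩)
    · have hadj : (H \ SimpleGraph.fromEdgeSet {s(x, y)}).Adj u c := by
        rw [sdiff_adj]
        refine ⟨h, ?_⟩
        rw [fromEdgeSet_adj]
        rintro ⟨hmem, -⟩
        exact hg hmem
      rcases ih with h1 | ⟨h1, h2⟩ | ⟨h1, h2⟩
      · exact Or.inl (hadj.reachable.trans h1)
      · exact Or.inr (Or.inl ⟨hadj.reachable.trans h1, h2⟩)
      · exact Or.inr (Or.inr ⟨hadj.reachable.trans h1, h2⟩)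

/-- In an acyclic graph, deleting an edge of a path disconnects its endpoints. -/
private lemma aux_path_sep [DecidableEq V] {H : SimpleGraph V} (hac : H.IsAcyclic) {a b : V}
    (p : H.Path a b) {e : Sym2 V} (he : e ∈ (p : H.Walk a b).edges) :
    ¬(H \ SimpleGraph.fromEdgeSet {e}).Reachable a b := by
  rintro ⟨q⟩
  have hdiag : ¬e.IsDiag :=
    H.not_isDiag_of_mem_edgeSet ((p : H.Walk a b).edges_subset_edgeSet he)
  have hsub : ∀ e' ∈ q.edges, e' ∈ H.edgeSet := by
    intro e' h'
    have := q.edges_subset_edgeSet h'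
    rw [edgeSet_sdiff] at this
    exact this.1
  have hnq : e ∉ q.edges := by
    intro h'
    have := q.edges_subset_edgeSet h'
    rw [edgeSet_sdiff, edgeSet_fromEdgeSet] at this
    exact this.2 ⟨rfl, hdiag⟩
  have hpq : p = (q.transfer H hsub).toPath := hac.path_unique p (q.transfer H hsub).toPath
  have hmem : e ∈ ((q.transfer H hsub).toPath : H.Walk a b).edges := by
    rw [← hpq]; exact he
  have := (q.transfer H hsub).edges_toPath_subset hmem
  rw [Walk.edges_transfer] at this
  exact hnq this

end AuxExchange

/-- If all spanning trees of a finite connected graph `G` have pairwise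
distinct total weights, then the minimal-weight spanning tree `T₁` and the
second-minimal-weight spanning tree `T₂` differ by exactly one edge. -/
theorem stmt_7 {V : Type*} [Fintype V] [DecidableEq V] (G : SimpleGraph V)
    (hG : G.Connected) (η : Sym2 V → ℝ)
    (hdistinct : ∀ T T' : SimpleGraph V, IsSpanningTree G T → IsSpanningTree G T' →
      T ≠ T' → Ham T η ≠ Ham T' η)
    (T₁ T₂ : SimpleGraph V)
    (hT₁ : IsSpanningTree G T₁) (hT₂ : IsSpanningTree G T₂) (hne : T₂ ≠ T₁)
    (hmin : ∀ T : SimpleGraph V, IsSpanningTree G T → Ham T₁ η ≤ Ham T η)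
    (hsecond : ∀ T : SimpleGraph V, IsSpanningTree G T → T ≠ T₁ →
      Ham T₂ η ≤ Ham T η) :
    (T₂.edgeFinset \ T₁.edgeFinset).card = 1 := by
    classical
  by_contra hcard
  have hconn₁ := hT₁.2.isConnected
  have hac₁ := hT₁.2.IsAcyclic
  have hconn₂ := hT₂.2.isConnected
  have hac₂ := hT₂.2.IsAcyclic
  have hcard₁ := hT₁.2.card_edgeFinset
  have hcard₂ := hT₂.2.card_edgeFinset
  have hTTne : T₂.edgeFinset ≠ T₁.edgeFinset := fun h => hne (SimpleGraph.edgeFinset_inj.mp h)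
  have hd21 : (T₂.edgeFinset \ T₁.edgeFinset).Nonempty := by
    rw [Finset.sdiff_nonempty]
    intro hsub
    exact hTTne (Finset.eq_of_subset_of_card_le hsub (by omega))
  have hd12 : (T₁.edgeFinset \ T₂.edgeFinset).Nonempty := by
    rw [Finset.sdiff_nonempty]
    intro hsub
    exact hTTne (Finset.eq_of_subset_of_card_le hsub (by omega)).symm
  have h2le : 2 ≤ (T₂.edgeFinset \ T₁.edgeFinset).card := by
    have := Finset.card_pos.mpr hd21
    omega
  -- pick `f = s(a,b) ∈ T₁ \ T₂`
  obtain ⟨a, b, hfmem⟩ := Sym2.exists.mp hd12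
  rw [Finset.mem_sdiff, SimpleGraph.mem_edgeFinset, SimpleGraph.mem_edgeFinset] at hfmem
  obtain ⟨hf1', hf2⟩ := hfmem
  have hf1 : T₁.Adj a b := hf1'
  have hf2' : ¬T₂.Adj a b := fun h => hf2 h
  have hab : a ≠ b := hf1.ne
  set D₁ := T₁ \ SimpleGraph.fromEdgeSet {s(a, b)} with hD₁
  have hsep1 : ¬D₁.Reachable a b :=
    SimpleGraph.isBridge_iff.mp ((SimpleGraph.isAcyclic_iff_forall_adj_isBridge.mp hac₁) hf1)
  -- the T₂-path from `a` to `b` and its boundary dart across the cut of `T₁ - f`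
  obtain ⟨w₀⟩ := hconn₂.preconnected a b
  set p : T₂.Path a b := w₀.toPath with hp
  have hbS : b ∉ {v | D₁.Reachable a v} := hsep1
  obtain ⟨d, hdp, hdS, hdS'⟩ := (p : T₂.Walk a b).exists_boundary_dart
    {v | D₁.Reachable a v} (SimpleGraph.Reachable.refl a) hbS
  set x := d.fst with hxdef
  set y := d.snd with hydef
  have hxS : D₁.Reachable a x := hdS
  have hyS : ¬D₁.Reachable a y := hdS'
  have hxy2 : T₂.Adj x y := d.adj
  have hxy : x ≠ y := hxy2.ne
  have hep : s(x, y) ∈ (p : T₂.Walk a b).edges := List.mem_map_of_mem (f := SimpleGraph.Dart.edge) hdp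
  have he2 : s(x, y) ∈ T₂.edgeSet := hxy2
  have hfe : s(a, b) ≠ s(x, y) := fun h => hf2 (h ▸ he2)
  have he1 : s(x, y) ∉ T₁.edgeSet := by
    intro hmem
    have hadj : D₁.Adj x y := by
      rw [hD₁, SimpleGraph.sdiff_adj]
      refine ⟨hmem, ?_⟩
      rw [SimpleGraph.fromEdgeSet_adj]
      rintro ⟨hm, -⟩
      exact hfe (Set.mem_singleton_iff.mp hm).symm
    exact hyS (hxS.trans hadj.reachable)
  set D₂ := T₂ \ SimpleGraph.fromEdgeSet {s(x, y)} with hD₂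
  have hsep2xy : ¬D₂.Reachable x y :=
    SimpleGraph.isBridge_iff.mp ((SimpleGraph.isAcyclic_iff_forall_adj_isBridge.mp hac₂) hxy2)
  have hsep2 : ¬D₂.Reachable a b := aux_path_sep hac₂ p hep
  set T₃ := D₁ ⊔ SimpleGraph.fromEdgeSet {s(x, y)} with hT₃def
  set T₄ := (T₂ ⊔ SimpleGraph.fromEdgeSet {s(a, b)}) \ SimpleGraph.fromEdgeSet {s(x, y)} with hT₄def
  -- subgraph relations
  have heG : SimpleGraph.fromEdgeSet {s(x, y)} ≤ G := by
    intro u v h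
    rw [SimpleGraph.fromEdgeSet_adj, Set.mem_singleton_iff] at h
    have : s(u, v) ∈ G.edgeSet := by rw [h.1]; exact hT₂.1 hxy2
    exact this
  have hfG : SimpleGraph.fromEdgeSet {s(a, b)} ≤ G := by
    intro u v h
    rw [SimpleGraph.fromEdgeSet_adj, Set.mem_singleton_iff] at h
    have : s(u, v) ∈ G.edgeSet := by rw [h.1]; exact hT₁.1 hf1
    exact this
  have hT₃le : T₃ ≤ G := sup_le (sdiff_le.trans hT₁.1) heG
  have hT₄le : T₄ ≤ G := sdiff_le.trans (sup_le hT₂.1 hfG)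
  -- the two components of `T₁ - f`
  have hcomp1 : ∀ v, D₁.Reachable a v ∨ D₁.Reachable b v := by
    intro v
    obtain ⟨w⟩ := hconn₁.preconnected a v
    rcases aux_split (x := a) (y := b) w with h | ⟨h1, h2⟩ | ⟨h1, h2⟩
    · exact Or.inl h
    · exact Or.inr h2
    · exact (hsep1 h1).elim
  -- connectivity of T₃
  have hD₁T₃ : D₁ ≤ T₃ := le_sup_left
  have he'T₃ : T₃.Adj x y := by
    rw [hT₃def, SimpleGraph.sup_adj, SimpleGraph.fromEdgeSet_adj]
    exact Or.inr ⟨rfl, hxy⟩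
  have hby : D₁.Reachable b y := (hcomp1 y).resolve_left hyS
  have hab3 : T₃.Reachable a b :=
    ((hxS.mono hD₁T₃).trans he'T₃.reachable).trans (hby.mono hD₁T₃).symm
  have hconn₃ : T₃.Connected := by
    rw [SimpleGraph.connected_iff]
    refine ⟨fun u v => ?_, hG.nonempty⟩
    have key : ∀ z, T₃.Reachable a z := by
      intro z
      rcases hcomp1 z with h | h
      · exact h.mono hD₁T₃
      · exact hab3.trans (h.mono hD₁T₃)
    exact (key u).symm.trans (key v)
  -- acyclicity of T₃
  have hac₃ : T₃.IsAcyclic := by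
    intro v c hc
    by_cases hec : s(x, y) ∈ c.edges
    · have hreach := (SimpleGraph.adj_and_reachable_delete_edges_iff_exists_cycle.mpr
        ⟨v, c, hc, hec⟩).2
      have hle : T₃ \ SimpleGraph.fromEdgeSet {s(x, y)} ≤ D₁ := by
        intro u' v' h'
        rw [SimpleGraph.sdiff_adj, hT₃def, SimpleGraph.sup_adj] at h'
        rcases h' with ⟨h1 | h1, h2⟩
        · exact h1
        · exact (h2 h1).elim
      exact hyS (hxS.trans (hreach.mono hle))
    · have hsub : ∀ e ∈ c.edges, e ∈ T₁.edgeSet := by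
        intro e hecc
        have hmem := c.edges_subset_edgeSet hecc
        rw [hT₃def, SimpleGraph.edgeSet_sup, hD₁, SimpleGraph.edgeSet_sdiff,
          SimpleGraph.edgeSet_fromEdgeSet, SimpleGraph.edgeSet_fromEdgeSet] at hmem
        rcases hmem with h | h
        · exact h.1
        · exact absurd (Set.mem_singleton_iff.mp h.1 ▸ hecc) hec
      exact hac₁ (c.transfer T₁ hsub) (hc.transfer hsub)
  -- connectivity of T₄
  have hD₂T₄ : D₂ ≤ T₄ := by
    intro u' v' h'
    rw [hD₂, SimpleGraph.sdiff_adj] at h'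
    rw [hT₄def, SimpleGraph.sdiff_adj, SimpleGraph.sup_adj]
    exact ⟨Or.inl h'.1, h'.2⟩
  have hfT₄ : T₄.Adj a b := by
    rw [hT₄def, SimpleGraph.sdiff_adj, SimpleGraph.sup_adj, SimpleGraph.fromEdgeSet_adj,
      SimpleGraph.fromEdgeSet_adj]
    refine ⟨Or.inr ⟨rfl, hab⟩, ?_⟩
    rintro ⟨hm, -⟩
    exact hfe (Set.mem_singleton_iff.mp hm)
  have hsplit : (D₂.Reachable a x ∧ D₂.Reachable y b) ∨
      (D₂.Reachable a y ∧ D₂.Reachable x b) := by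
    rcases aux_split (x := x) (y := y) (p : T₂.Walk a b) with h | h | h
    · exact (hsep2 h).elim
    · exact Or.inl h
    · exact Or.inr h
  have hxyT₄ : T₄.Reachable x y := by
    rcases hsplit with ⟨h1, h2⟩ | ⟨h1, h2⟩
    · exact ((h1.mono hD₂T₄).symm.trans hfT₄.reachable).trans (h2.mono hD₂T₄).symm
    · exact ((h2.mono hD₂T₄).trans hfT₄.reachable.symm).trans (h1.mono hD₂T₄)
  have hconn₄ : T₄.Connected := by
    rw [SimpleGraph.connected_iff]
    refine ⟨fun u v => ?_, hG.nonempty⟩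
    obtain ⟨q⟩ := hconn₂.preconnected u v
    rcases aux_split (x := x) (y := y) q with h | ⟨h1, h2⟩ | ⟨h1, h2⟩
    · exact h.mono hD₂T₄
    · exact ((h1.mono hD₂T₄).trans hxyT₄).trans (h2.mono hD₂T₄)
    · exact ((h1.mono hD₂T₄).trans hxyT₄.symm).trans (h2.mono hD₂T₄)
  -- acyclicity of T₄
  have hac₄ : T₄.IsAcyclic := by
    intro v c hc
    by_cases hfc : s(a, b) ∈ c.edges
    · have hreach := (SimpleGraph.adj_and_reachable_delete_edges_iff_exists_cycle.mpr
        ⟨v, c, hc, hfc⟩).2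
      have hle : T₄ \ SimpleGraph.fromEdgeSet {s(a, b)} ≤ D₂ := by
        intro u' v' h'
        rw [SimpleGraph.sdiff_adj, hT₄def, SimpleGraph.sdiff_adj, SimpleGraph.sup_adj] at h'
        rw [hD₂, SimpleGraph.sdiff_adj]
        rcases h' with ⟨⟨h1 | h1, h2⟩, h3⟩
        · exact ⟨h1, h2⟩
        · exact (h3 h1).elim
      exact hsep2 (hreach.mono hle)
    · have hsub : ∀ e ∈ c.edges, e ∈ T₂.edgeSet := by
        intro e hecc
        have hmem := c.edges_subset_edgeSet hecc
        rw [hT₄def, SimpleGraph.edgeSet_sdiff, SimpleGraph.edgeSet_sup,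
          SimpleGraph.edgeSet_fromEdgeSet, SimpleGraph.edgeSet_fromEdgeSet] at hmem
        rcases hmem with ⟨h | h, -⟩
        · exact h
        · exact absurd (Set.mem_singleton_iff.mp h.1 ▸ hecc) hfc
      exact hac₂ (c.transfer T₂ hsub) (hc.transfer hsub)
  -- edge finsets of T₃ and T₄
  have hd1 : ¬(s(a, b) : Sym2 V).IsDiag := by simp [hab]
  have hd2 : ¬(s(x, y) : Sym2 V).IsDiag := by simp [hxy]
  have hE₃ : ∀ e : Sym2 V, e ∈ T₃.edgeSet ↔ e = s(x, y) ∨ (e ≠ s(a, b) ∧ e ∈ T₁.edgeSet) := by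
    intro e
    simp only [SimpleGraph.mem_edgeFinset, hT₃def, hD₁,
      SimpleGraph.edgeSet_sup, SimpleGraph.edgeSet_sdiff, SimpleGraph.edgeSet_fromEdgeSet,
      Set.mem_union, Set.mem_diff, Set.mem_singleton_iff, Set.mem_setOf_eq]
    constructor
    · rintro (⟨h1, h2⟩ | ⟨h1, h2⟩)
      · exact Or.inr ⟨fun heq => h2 ⟨heq, heq ▸ hd1⟩, h1⟩
      · exact Or.inl h1
    · rintro (rfl | ⟨h1, h2⟩)
      · exact Or.inr ⟨rfl, hd2⟩
      · exact Or.inl ⟨h2, fun hm => h1 hm.1⟩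
  have hE₄ : ∀ e : Sym2 V, e ∈ T₄.edgeSet ↔ e = s(a, b) ∨ (e ≠ s(x, y) ∧ e ∈ T₂.edgeSet) := by
    intro e
    simp only [SimpleGraph.mem_edgeFinset, hT₄def,
      SimpleGraph.edgeSet_sdiff, SimpleGraph.edgeSet_sup, SimpleGraph.edgeSet_fromEdgeSet,
      Set.mem_union, Set.mem_diff, Set.mem_singleton_iff, Set.mem_setOf_eq]
    constructor
    · rintro ⟨h1 | h1, h2⟩
      · exact Or.inr ⟨fun heq => h2 ⟨heq, heq ▸ hd2⟩, h1⟩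
      · exact Or.inl h1.1
    · rintro (rfl | ⟨h1, h2⟩)
      · exact ⟨Or.inr ⟨rfl, hd1⟩, fun hm => hfe hm.1⟩
      · exact ⟨Or.inl h2, fun hm => h1 hm.1⟩
  -- Hamiltonians
  have hfmem₁ : s(a, b) ∈ T₁.edgeFinset := SimpleGraph.mem_edgeFinset.mpr hf1'
  have he'mem₂ : s(x, y) ∈ T₂.edgeFinset := SimpleGraph.mem_edgeFinset.mpr he2
  have he'not : s(x, y) ∉ T₁.edgeFinset.erase s(a, b) := fun h =>
    he1 (SimpleGraph.mem_edgeFinset.mp (Finset.mem_of_mem_erase h))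
  have hfnot : s(a, b) ∉ T₂.edgeFinset.erase s(x, y) := fun h =>
    hf2 (SimpleGraph.mem_edgeFinset.mp (Finset.mem_of_mem_erase h))
  have hHam₃ : Ham T₃ η = η s(x, y) + (Ham T₁ η - η s(a, b)) := by
    have h0 : Ham T₁ η = ∑ e ∈ T₁.edgeFinset, η e := rfl
    have h1 := Finset.add_sum_erase T₁.edgeFinset η hfmem₁
    have h2 : Ham T₃ η = ∑ e ∈ insert s(x, y) (T₁.edgeFinset.erase s(a, b)), η e := by
      apply Finset.sum_congr _ fun _ _ => rfl
      apply Finset.ext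
      intro e
      simp only [SimpleGraph.mem_edgeFinset, Finset.mem_insert, Finset.mem_erase]
      exact hE₃ e
    rw [h2, Finset.sum_insert he'not]
    linarith
  have hHam₄ : Ham T₄ η = η s(a, b) + (Ham T₂ η - η s(x, y)) := by
    have h0 : Ham T₂ η = ∑ e ∈ T₂.edgeFinset, η e := rfl
    have h1 := Finset.add_sum_erase T₂.edgeFinset η he'mem₂
    have h2 : Ham T₄ η = ∑ e ∈ insert s(a, b) (T₂.edgeFinset.erase s(x, y)), η e := by
      apply Finset.sum_congr _ fun _ _ => rfl
      apply Finset.ext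
      intro e
      simp only [SimpleGraph.mem_edgeFinset, Finset.mem_insert, Finset.mem_erase]
      exact hE₄ e
    rw [h2, Finset.sum_insert hfnot]
    linarith
  -- a second edge of `T₂ \ T₁`
  have he'diff : s(x, y) ∈ T₂.edgeFinset \ T₁.edgeFinset :=
    Finset.mem_sdiff.mpr ⟨he'mem₂, fun h => he1 (SimpleGraph.mem_edgeFinset.mp h)⟩
  have herase : ((T₂.edgeFinset \ T₁.edgeFinset).erase s(x, y)).Nonempty := by
    rw [← Finset.card_pos, Finset.card_erase_of_mem he'diff]
    omega
  obtain ⟨e₂, he₂⟩ := herase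
  have he₂ne : e₂ ≠ s(x, y) := Finset.ne_of_mem_erase he₂
  have he₂mem := Finset.mem_sdiff.mp (Finset.mem_of_mem_erase he₂)
  have he₂2 : e₂ ∈ T₂.edgeFinset := he₂mem.1
  have he₂1 : e₂ ∉ T₁.edgeFinset := he₂mem.2
  -- the four inequalities and the contradiction
  have hST₃ : IsSpanningTree G T₃ := ⟨hT₃le, hconn₃, hac₃⟩
  have hST₄ : IsSpanningTree G T₄ := ⟨hT₄le, hconn₄, hac₄⟩
  have hT₃ne₁ : T₃ ≠ T₁ := by
    intro h
    exact he1 (h ▸ he'T₃)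
  have hT₃ne₂ : T₃ ≠ T₂ := by
    intro h
    have hm : e₂ ∈ T₃.edgeSet := h ▸ SimpleGraph.mem_edgeFinset.mp he₂2
    rcases (hE₃ e₂).mp hm with h' | ⟨-, h'⟩
    · exact he₂ne h'
    · exact he₂1 (SimpleGraph.mem_edgeFinset.mpr h')
  have hT₄ne₂ : T₄ ≠ T₂ := fun h => hf2' (h ▸ hfT₄)
  have hT₄ne₁ : T₄ ≠ T₁ := by
    intro h
    apply he₂1
    have hm : e₂ ∈ T₄.edgeSet := (hE₄ e₂).mpr (Or.inr ⟨he₂ne, SimpleGraph.mem_edgeFinset.mp he₂2⟩)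
    exact SimpleGraph.mem_edgeFinset.mpr (h ▸ hm)
  have hle₂₃ : Ham T₂ η ≤ Ham T₃ η := hsecond T₃ hST₃ hT₃ne₁
  have hne₂₃ : Ham T₂ η ≠ Ham T₃ η := hdistinct T₂ T₃ hT₂ hST₃ (Ne.symm hT₃ne₂)
  have hle₂₄ : Ham T₂ η ≤ Ham T₄ η := hsecond T₄ hST₄ hT₄ne₁
  have hne₂₄ : Ham T₂ η ≠ Ham T₄ η := hdistinct T₂ T₄ hT₂ hST₄ (Ne.symm hT₄ne₂)
  have hm12 : Ham T₁ η ≤ Ham T₂ η := hmin T₂ hT₂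
  have h3 : Ham T₂ η < Ham T₃ η := lt_of_le_of_ne hle₂₃ hne₂₃
  have h4 : Ham T₂ η < Ham T₄ η := lt_of_le_of_ne hle₂₄ hne₂₄
  linarith
end

section
/- Suppose μ satisfies Assumption (A) with exponent α > 0. Let (ω_i)_{i≥1} be i.i.d. with distribution μ, let β ≥ 0, set w_i = exp(−β ω_i), ξ = E[exp(−β ω_1)], and S_m = Σ_{i=1}^m w_i. Then there exists a constant C_B = C_B(μ) > 0 such that for every m ≥ 1 and every 0 < δ < 1, P( |S_m − m ξ| ≥ δ m ξ ) ≤ 2 exp( − C_B δ² m / max{β^α, 1} ). -/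
open MeasureTheory Finset

attribute [local instance] Classical.propDecidable

section AuxConc

open Real MeasureTheory

private lemma aux_exp_quad {x : ℝ} (hx : |x| ≤ 1) : Real.exp x ≤ 1 + x + x ^ 2 := by
  have h := Real.exp_bound hx (by norm_num : 0 < 2)
  rw [show (∑ m ∈ Finset.range 2, x ^ m / m.factorial) = 1 + x by
    simp [Finset.sum_range_succ]] at h
  have h2 := (abs_le.mp h).2
  have h3 : |x| ^ 2 = x ^ 2 := sq_abs x
  norm_num [Nat.factorial] at h2
  nlinarith [sq_nonneg x]

private lemma aux_exp_convex {t w : ℝ} (h0 : 0 ≤ w) (h1 : w ≤ 1) :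
    Real.exp (t * w) ≤ 1 + (Real.exp t - 1) * w := by
  have h := convexOn_exp.2 (Set.mem_univ (0 : ℝ)) (Set.mem_univ t)
    (by linarith : (0:ℝ) ≤ 1 - w) h0 (by ring)
  simp only [smul_eq_mul, mul_zero, zero_add, Real.exp_zero, mul_one] at h
  calc Real.exp (t * w) = Real.exp (w * t) := by rw [mul_comm]
    _ ≤ (1 - w) + w * Real.exp t := h
    _ = 1 + (Real.exp t - 1) * w := by ring

variable {μ : Measure ℝ} [IsProbabilityMeasure μ]

private lemma aux_ae_nonneg (hneg : μ (Set.Iio 0) = 0) : ∀ᵐ s ∂μ, 0 ≤ s := by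
  rw [ae_iff]
  have : {s : ℝ | ¬ 0 ≤ s} = Set.Iio 0 := by ext s; simp [not_le]
  rw [this]; exact hneg

private lemma aux_w_le_one {β s : ℝ} (hβ : 0 ≤ β) (hs : 0 ≤ s) : Real.exp (-β * s) ≤ 1 := by
  rw [← Real.exp_zero]
  exact Real.exp_le_exp.mpr (by nlinarith)

private lemma aux_integrable_exp (hneg : μ (Set.Iio 0) = 0) {β : ℝ} (hβ : 0 ≤ β) (t : ℝ) :
    Integrable (fun s => Real.exp (t * Real.exp (-β * s))) μ := by
  refine Integrable.mono' (integrable_const (Real.exp |t|)) ?_ ?_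
  · exact (Real.continuous_exp.comp ((continuous_const.mul
      ((Real.continuous_exp.comp (continuous_const.mul continuous_id))))) ).aestronglyMeasurable
  · filter_upwards [aux_ae_nonneg hneg] with s hs
    rw [Real.norm_eq_abs, Real.abs_exp]
    apply Real.exp_le_exp.mpr
    have h1 : Real.exp (-β * s) ≤ 1 := aux_w_le_one hβ hs
    have h2 : (0:ℝ) < Real.exp (-β * s) := Real.exp_pos _
    calc t * Real.exp (-β * s) ≤ |t| * Real.exp (-β * s) :=
          mul_le_mul_of_nonneg_right (le_abs_self t) h2.le
      _ ≤ |t| * 1 := mul_le_mul_of_nonneg_left h1 (abs_nonneg t)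
      _ = |t| := mul_one _

private lemma aux_integrable_w (hneg : μ (Set.Iio 0) = 0) {β : ℝ} (hβ : 0 ≤ β) :
    Integrable (fun s => Real.exp (-β * s)) μ := by
  refine Integrable.mono' (integrable_const 1) ?_ ?_
  · exact (Real.continuous_exp.comp (continuous_const.mul continuous_id)).aestronglyMeasurable
  · filter_upwards [aux_ae_nonneg hneg] with s hs
    rw [Real.norm_eq_abs, Real.abs_exp]
    exact aux_w_le_one hβ hs

private lemma aux_mgf_le (hneg : μ (Set.Iio 0) = 0) {β : ℝ} (hβ : 0 ≤ β) (t : ℝ) :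
    ∫ s, Real.exp (t * Real.exp (-β * s)) ∂μ ≤
      Real.exp ((Real.exp t - 1) * ∫ s, Real.exp (-β * s) ∂μ) := by
  have hint := aux_integrable_w hneg hβ
  have h1 : ∫ s, Real.exp (t * Real.exp (-β * s)) ∂μ ≤
      ∫ s, (1 + (Real.exp t - 1) * Real.exp (-β * s)) ∂μ := by
    refine integral_mono_ae (aux_integrable_exp hneg hβ t)
      ((integrable_const 1).add (hint.const_mul _)) ?_
    filter_upwards [aux_ae_nonneg hneg] with s hs
    exact aux_exp_convex (Real.exp_pos _).le (aux_w_le_one hβ hs)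
  rw [integral_add (integrable_const 1) (hint.const_mul _), integral_const,
    integral_const_mul _ _] at h1
  simp only [probReal_univ, ENNReal.toReal_one, smul_eq_mul, one_mul] at h1
  have h2 := Real.add_one_le_exp ((Real.exp t - 1) * ∫ s, Real.exp (-β * s) ∂μ)
  linarith

private lemma aux_pi_pow (μ : Measure ℝ) [IsProbabilityMeasure μ] (m : ℕ) (g : ℝ → ℝ) :
    ∫ x : Fin m → ℝ, ∏ i, g (x i) ∂(Measure.pi fun _ : Fin m => μ) = (∫ s, g s ∂μ) ^ m := by
  letI : MeasureSpace ℝ := ⟨μ⟩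
  have h := MeasureTheory.integral_fintype_prod_eq_pow (𝕜 := ℝ) (ι := Fin m) g (μ := μ)
  rw [Fintype.card_fin] at h
  exact h

private lemma aux_pi_integrable (μ : Measure ℝ) [IsProbabilityMeasure μ] (m : ℕ) (g : ℝ → ℝ)
    (hg : Integrable g μ) :
    Integrable (fun x : Fin m → ℝ => ∏ i, g (x i)) (Measure.pi fun _ : Fin m => μ) := by
  letI : MeasureSpace ℝ := ⟨μ⟩
  exact MeasureTheory.Integrable.fintype_prod (𝕜 := ℝ) (f := fun _ : Fin m => g) (fun _ => hg)

end AuxConc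

set_option maxHeartbeats 1000000 in
/-- concentration of edge-weight sums. Under Assumption (A), there is
`C_B = C_B(μ) > 0` such that for i.i.d. `(ω_i)` with law `μ`, `w_i = exp(-β ω_i)`,
`ξ = E[w_1]` and `S_m = Σ_{i<m} w_i`, for all `m ≥ 1` and `0 < δ < 1`,
`P(|S_m - mξ| ≥ δ m ξ) ≤ 2 exp(-C_B δ² m / max{β^α, 1})`. -/
theorem stmt_11 (μ : Measure ℝ) [IsProbabilityMeasure μ] (α : ℝ)
    (hA : AssumptionA μ α) :
    ∃ CB > (0:ℝ),
      ∀ (m : ℕ), 1 ≤ m → ∀ β : ℝ, 0 ≤ β → ∀ δ : ℝ, 0 < δ → δ < 1 →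
        ((Measure.pi fun _ : Fin m => μ)
            {x : Fin m → ℝ |
              δ * (m * ∫ s, Real.exp (-β * s) ∂μ) ≤
                |(∑ i, Real.exp (-β * x i)) - m * ∫ s, Real.exp (-β * s) ∂μ|}).toReal
          ≤ 2 * Real.exp (-CB * δ ^ 2 * m / max (β ^ α) 1) := by
  classical
  obtain ⟨hα, hneg, cμ, hcμ, ρ, hρ, hcdf⟩ := hA
  set r : ℝ := min ρ 1 with hrdef
  have hr0 : 0 < r := lt_min hρ one_pos
  have hr1 : r ≤ 1 := min_le_right _ _
  have hrρ : r ≤ ρ := min_le_left _ _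
  have hrα : (0:ℝ) < r ^ α := Real.rpow_pos_of_pos hr0 α
  set c1 : ℝ := Real.exp (-1) * (cμ * r ^ α) with hc1def
  have hc1 : 0 < c1 := by
    have := Real.exp_pos (-1)
    positivity
  clear_value c1
  refine ⟨c1 / 4, by linarith, ?_⟩
  intro m hm β hβ δ hδ0 hδ1
  set ξ : ℝ := ∫ s, Real.exp (-β * s) ∂μ with hξdef
  clear_value ξ
  have hmax1 : (1:ℝ) ≤ max (β ^ α) 1 := le_max_right _ _
  have hmax0 : (0:ℝ) < max (β ^ α) 1 := lt_of_lt_of_le one_pos hmax1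
  -- lower bound ξ ≥ c1 / max (β^α) 1
  have hxi_lb : c1 / max (β ^ α) 1 ≤ ξ := by
    rw [hξdef]
    set M : ℝ := max β 1 with hMdef
    have hM1 : (1:ℝ) ≤ M := le_max_right _ _
    have hM0 : (0:ℝ) < M := lt_of_lt_of_le one_pos hM1
    have hMα : M ^ α = max (β ^ α) 1 := by
      rcases le_total β 1 with h | h
      · have h1 : M = 1 := max_eq_right h
        have h2 : β ^ α ≤ 1 := Real.rpow_le_one hβ h hα.le
        rw [h1, Real.one_rpow, max_eq_right h2]
      · have h1 : M = β := max_eq_left h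
        have h2 : (1:ℝ) ≤ β ^ α := Real.one_le_rpow h hα.le
        rw [h1, max_eq_left h2]
    set t0 : ℝ := r / M with ht0def
    have ht00 : 0 ≤ t0 := by positivity
    have ht0ρ : t0 ≤ ρ := le_trans (by rw [ht0def]; exact div_le_self hr0.le hM1) hrρ
    have hβt0 : β * t0 ≤ 1 := by
      have hβM : β ≤ M := le_max_left _ _
      have h1 : β / M ≤ 1 := (div_le_one hM0).mpr hβM
      calc β * t0 = (β / M) * r := by rw [ht0def]; ring
        _ ≤ 1 * 1 := mul_le_mul h1 hr1 hr0.le one_pos.le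
        _ = 1 := mul_one 1
    have hpt : ∀ s : ℝ, (Set.Icc 0 t0).indicator (fun _ => Real.exp (-1)) s
        ≤ Real.exp (-β * s) := by
      intro s
      by_cases hs : s ∈ Set.Icc 0 t0
      · rw [Set.indicator_of_mem hs]
        apply Real.exp_le_exp.mpr
        have hβs : β * s ≤ β * t0 := mul_le_mul_of_nonneg_left hs.2 hβ
        nlinarith
      · rw [Set.indicator_of_notMem hs]
        exact (Real.exp_pos _).le
    have hind_int : Integrable ((Set.Icc 0 t0).indicator fun _ => Real.exp (-1)) μ :=
      (integrable_const _).indicator measurableSet_Icc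
    have hmono := integral_mono hind_int (aux_integrable_w hneg hβ) hpt
    rw [integral_indicator_const _ measurableSet_Icc] at hmono
    have hIcc : μ (Set.Icc 0 t0) = μ (Set.Iic t0) := by
      have hset : Set.Icc 0 t0 = Set.Iic t0 \ Set.Iio 0 := by
        ext s; simp only [Set.mem_Icc, Set.mem_diff, Set.mem_Iic, Set.mem_Iio, not_lt]
        tauto
      rw [hset, measure_diff_null hneg]
    have hval : (μ (Set.Icc 0 t0)).toReal = cμ * t0 ^ α := by
      rw [hIcc]; exact hcdf t0 ht00 ht0ρ
    rw [measureReal_def, hval] at hmono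
    have ht0α : t0 ^ α = r ^ α / M ^ α := by
      rw [ht0def]; exact Real.div_rpow hr0.le hM0.le α
    have heq : c1 / max (β ^ α) 1 = cμ * t0 ^ α * Real.exp (-1) := by
      rw [← hMα, ht0α, hc1def]
      field_simp
    rw [heq]
    simpa only [smul_eq_mul] using hmono
  have hξpos : 0 < ξ := lt_of_lt_of_le (div_pos hc1 hmax0) hxi_lb
  have hm0 : (0:ℝ) ≤ (m:ℝ) := Nat.cast_nonneg m
  have hmξ : (0:ℝ) ≤ (m:ℝ) * ξ := mul_nonneg hm0 hξpos.le
  set P := (Measure.pi fun _ : Fin m => μ) with hPdef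
  haveI : IsProbabilityMeasure P := by rw [hPdef]; infer_instance
  clear_value P
  set t : ℝ := δ / 2 with htdef
  clear_value t
  have ht0 : 0 < t := by rw [htdef]; positivity
  have ht1 : t ≤ 1 := by rw [htdef]; linarith
  -- unified tail bound
  have tail : ∀ σ : ℝ, σ = 1 ∨ σ = -1 →
      (P {x : Fin m → ℝ | δ * (↑m * ξ) ≤
          σ * ((∑ i, Real.exp (-β * x i)) - ↑m * ξ)}).toReal
        ≤ Real.exp (-(↑m * ξ * δ ^ 2 / 4)) := by
    intro σ hσ
    have hexpσ : Real.exp (σ * t) ≤ 1 + σ * t + t ^ 2 := by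
      rcases hσ with h | h <;> subst h
      · simpa using aux_exp_quad (x := t) (by rw [abs_of_pos ht0]; linarith)
      · have := aux_exp_quad (x := -t) (by rw [abs_neg, abs_of_pos ht0]; linarith)
        calc Real.exp (-1 * t) = Real.exp (-t) := by ring_nf
          _ ≤ 1 + (-t) + (-t) ^ 2 := this
          _ = 1 + (-1) * t + t ^ 2 := by ring
    have hg : Integrable (fun s => Real.exp ((σ * t) * Real.exp (-β * s))) μ :=
      aux_integrable_exp hneg hβ _
    have hfun : (fun x : Fin m → ℝ =>
          Real.exp (t * (σ * ((∑ i, Real.exp (-β * x i)) - ↑m * ξ))))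
        = fun x => Real.exp (-(σ * t * (↑m * ξ))) *
            ∏ i, Real.exp ((σ * t) * Real.exp (-β * x i)) := by
      funext x
      rw [← Real.exp_sum, ← Real.exp_add]
      congr 1
      rw [← Finset.mul_sum]
      ring
    have hintX : Integrable (fun x : Fin m → ℝ =>
        Real.exp (t * (σ * ((∑ i, Real.exp (-β * x i)) - ↑m * ξ)))) P := by
      rw [hfun, hPdef]
      exact (aux_pi_integrable μ m _ hg).const_mul _
    have hch := ProbabilityTheory.measure_ge_le_exp_mul_mgf (μ := P)
      (X := fun x : Fin m → ℝ => σ * ((∑ i, Real.exp (-β * x i)) - ↑m * ξ))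
      (δ * (↑m * ξ)) ht0.le hintX
    have hmgf : ProbabilityTheory.mgf
        (fun x : Fin m → ℝ => σ * ((∑ i, Real.exp (-β * x i)) - ↑m * ξ)) P t
        ≤ Real.exp (-(σ * t * (↑m * ξ))) * Real.exp ((Real.exp (σ * t) - 1) * ξ) ^ m := by
      rw [ProbabilityTheory.mgf]
      rw [hfun, integral_const_mul _ _, hPdef,
        aux_pi_pow μ m (fun s => Real.exp (σ * t * Real.exp (-β * s)))]
      have hnn : (0:ℝ) ≤ ∫ s, Real.exp ((σ * t) * Real.exp (-β * s)) ∂μ :=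
        integral_nonneg fun s => (Real.exp_pos _).le
      have hb := aux_mgf_le hneg hβ (σ * t)
      rw [← hξdef] at hb
      have hpow : (∫ s, Real.exp ((σ * t) * Real.exp (-β * s)) ∂μ) ^ m
          ≤ Real.exp ((Real.exp (σ * t) - 1) * ξ) ^ m :=
        pow_le_pow_left₀ hnn hb m
      exact mul_le_mul_of_nonneg_left hpow (Real.exp_pos _).le
    have hmul := mul_le_mul_of_nonneg_left hmgf (Real.exp_pos (-t * (δ * (↑m * ξ)))).le
    have hcomb := le_trans hch hmul
    have hrw : Real.exp (-t * (δ * (↑m * ξ))) *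
        (Real.exp (-(σ * t * (↑m * ξ))) * Real.exp ((Real.exp (σ * t) - 1) * ξ) ^ m)
        = Real.exp (-t * (δ * (↑m * ξ)) + (-(σ * t * (↑m * ξ)))
            + ↑m * ((Real.exp (σ * t) - 1) * ξ)) := by
      rw [← Real.exp_nat_mul, ← Real.exp_add, ← Real.exp_add]
      exact congrArg Real.exp (by ring)
    rw [hrw] at hcomb
    refine le_trans hcomb (Real.exp_le_exp.mpr ?_)
    have hE : (Real.exp (σ * t) - 1) * ξ ≤ (σ * t + t ^ 2) * ξ :=
      mul_le_mul_of_nonneg_right (by linarith) hξpos.le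
    have hE2 : (↑m : ℝ) * ((Real.exp (σ * t) - 1) * ξ) ≤ ↑m * ((σ * t + t ^ 2) * ξ) :=
      mul_le_mul_of_nonneg_left hE hm0
    simp only [htdef] at hE2 ⊢
    nlinarith [hmξ, hξpos.le, hE2]
  -- combine the two tails
  have hsub : {x : Fin m → ℝ | δ * (↑m * ξ) ≤ |(∑ i, Real.exp (-β * x i)) - ↑m * ξ|}
      ⊆ {x : Fin m → ℝ | δ * (↑m * ξ) ≤ 1 * ((∑ i, Real.exp (-β * x i)) - ↑m * ξ)}
        ∪ {x : Fin m → ℝ | δ * (↑m * ξ) ≤ (-1) * ((∑ i, Real.exp (-β * x i)) - ↑m * ξ)} := by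
    intro x hx
    simp only [Set.mem_setOf_eq] at hx
    rcases le_abs.mp hx with h | h
    · left; simpa using h
    · right; simpa using h
  have h1 := tail 1 (Or.inl rfl)
  have h2 := tail (-1) (Or.inr rfl)
  have hPle : (P {x : Fin m → ℝ | δ * (↑m * ξ) ≤
        |(∑ i, Real.exp (-β * x i)) - ↑m * ξ|}).toReal
      ≤ (P {x : Fin m → ℝ | δ * (↑m * ξ) ≤
            1 * ((∑ i, Real.exp (-β * x i)) - ↑m * ξ)}).toReal
        + (P {x : Fin m → ℝ | δ * (↑m * ξ) ≤
            (-1) * ((∑ i, Real.exp (-β * x i)) - ↑m * ξ)}).toReal := by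
    rw [← ENNReal.toReal_add (measure_ne_top _ _) (measure_ne_top _ _)]
    exact ENNReal.toReal_mono
      (ENNReal.add_ne_top.mpr ⟨measure_ne_top _ _, measure_ne_top _ _⟩)
      (le_trans (measure_mono hsub) (measure_union_le _ _))
  have hfinal : -(↑m * ξ * δ ^ 2 / 4) ≤ -(c1 / 4) * δ ^ 2 * ↑m / max (β ^ α) 1 := by
    rw [neg_mul, neg_mul, neg_div, neg_le_neg_iff]
    have hmul := mul_le_mul_of_nonneg_left hxi_lb
      (show (0:ℝ) ≤ δ ^ 2 * ↑m / 4 by positivity)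
    calc c1 / 4 * δ ^ 2 * ↑m / max (β ^ α) 1
        = δ ^ 2 * ↑m / 4 * (c1 / max (β ^ α) 1) := by ring
      _ ≤ δ ^ 2 * ↑m / 4 * ξ := hmul
      _ = ↑m * ξ * δ ^ 2 / 4 := by ring
  calc (P {x : Fin m → ℝ | δ * (↑m * ξ) ≤
        |(∑ i, Real.exp (-β * x i)) - ↑m * ξ|}).toReal
      ≤ Real.exp (-(↑m * ξ * δ ^ 2 / 4)) + Real.exp (-(↑m * ξ * δ ^ 2 / 4)) :=
        le_trans hPle (add_le_add h1 h2)
    _ = 2 * Real.exp (-(↑m * ξ * δ ^ 2 / 4)) := by ring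
    _ ≤ 2 * Real.exp (-(c1 / 4) * δ ^ 2 * ↑m / max (β ^ α) 1) := by
        have := Real.exp_le_exp.mpr hfinal
        linarith
end

section
/- Suppose μ satisfies Assumption (A) with exponent α > 0, and let T be the RSTRE on the complete graph K_n with disorder strength β = β(n). Let ε = ε(n) → 0 and t = t(n) ≥ 1 with t(n)·ε(n) → 0, and set p = (1 + ε)/n and q = (1 + t ε)/n. For vertices u ≠ v, let F(u,v) be the event that u and v are connected by a path of p-open edges and the path γ_T(u,v) in T contains an edge e with ω_e > F_μ^{−1}(q). Then there exists a constant c_g = c_g(μ) > 0 such that for all sufficiently large n, \hat{P}( ⋃_{u ≠ v} F(u,v) ) ≤ n^5 exp( − c_g (t − 1) β ε / n^{1/α} ). -/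
open MeasureTheory Finset

attribute [local instance] Classical.propDecidable

noncomputable section Percolation

attribute [local instance] Classical.propDecidable

variable {V : Type*} [Fintype V] [DecidableEq V]

/-- The subgraph of `p`-open edges: `e` is `p`-open when `ω_e ≤ F_μ⁻¹(p)`. -/
def openGraph (μ : Measure ℝ) (ω : Sym2 V → ℝ) (p : ℝ) : SimpleGraph V where
  Adj u v := u ≠ v ∧ ω s(u, v) ≤ invCDF μ p
  symm := ⟨by
    rintro u v ⟨h1, h2⟩
    exact ⟨h1.symm, by rwa [Sym2.eq_swap]⟩⟩
  loopless := ⟨fun u h => h.1 rfl⟩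

/-- The connected component of `v` in `H`, as a finset. -/
def compFinset (H : SimpleGraph V) (v : V) : Finset V :=
  Finset.univ.filter fun u => H.Reachable v u

/-- The vertex set of a largest connected component of `H` (ties broken by choice). -/
def C1verts (H : SimpleGraph V) : Finset V :=
  if h : (Finset.univ : Finset V).Nonempty then
    compFinset H
      (Finset.exists_max_image Finset.univ (fun v => (compFinset H v).card) h).choose
  else ∅

/-- The minimal subtree `T_A` of `T` spanning the vertex set `A`: the union of the
paths of `T` between pairs of points of `A` (as a graph on `V`, all other vertices
being isolated). -/
def minimalSubtree (T : SimpleGraph V) (A : Set V) : SimpleGraph V where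
  Adj x y := ∃ u ∈ A, ∃ v ∈ A, ∃ q : T.Walk u v, q.IsPath ∧ s(x, y) ∈ q.edges
  symm := ⟨by
    rintro x y ⟨u, hu, v, hv, q, hq, he⟩
    exact ⟨u, hu, v, hv, q, hq, by rwa [Sym2.eq_swap]⟩⟩
  loopless := ⟨by
    rintro x ⟨u, hu, v, hv, q, hq, he⟩
    exact T.irrefl (T.mem_edgeSet.mp (q.edges_subset_edgeSet he))⟩

/-- The vertex set of the minimal subtree `T_A`. -/
def subtreeVerts (T : SimpleGraph V) (A : Set V) : Set V :=
  {x | ∃ u ∈ A, ∃ v ∈ A, ∃ q : T.Walk u v, q.IsPath ∧ x ∈ q.support}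

/-- Graph distance from a vertex to a set of vertices. -/
def distToSet (T : SimpleGraph V) (v : V) (B : Set V) : ℕ :=
  sInf {d : ℕ | ∃ u ∈ B, T.dist v u = d}

/-- `g_i = (5/4)^{i/2} g₀`. -/
def gSeq (g₀ : ℝ) (i : ℕ) : ℝ := (5 / 4 : ℝ) ^ ((i : ℝ) / 2) * g₀

/-- `p_i = (1 + g_i ε)/n`. -/
def pSeq (g₀ ε : ℝ) (n : ℕ) (i : ℕ) : ℝ := (1 + gSeq g₀ i * ε) / n

/-- `m = min{ i ≥ 0 : g_i ε ≥ 1/log n }`. -/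
def mIdx (g₀ ε : ℝ) (n : ℕ) : ℕ := sInf {i : ℕ | 1 / Real.log n ≤ gSeq g₀ i * ε}

end Percolation


/- ### Auxiliary lemmas for stmt_13 -/

section Stmt13Aux

open SimpleGraph

attribute [local instance] Classical.propDecidable

lemma stmt13_exists_crossing_adj {V : Type*} {G : SimpleGraph V} {u v : V} (w : G.Walk u v)
    (P : V → Prop) : P u → ¬ P v → ∃ x y, G.Adj x y ∧ P x ∧ ¬ P y := by
  induction w with
  | nil => intro hu hv; exact absurd hu hv
  | @cons a b c h w ih =>
    intro hu hv
    by_cases hb : P b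
    · exact ih hb hv
    · exact ⟨a, b, h, hu, hb⟩

lemma stmt13_reach_side {V : Type*} {G : SimpleGraph V} {a b : V}
    {z c : V} (w : G.Walk z c)
    (hc : (G.deleteEdges {s(a,b)}).Reachable a c ∨ (G.deleteEdges {s(a,b)}).Reachable b c) :
    (G.deleteEdges {s(a,b)}).Reachable a z ∨ (G.deleteEdges {s(a,b)}).Reachable b z := by
  induction w with
  | nil => exact hc
  | @cons x y c' h w ih =>
    have hy := ih hc
    by_cases he : s(x, y) = s(a, b)
    · rw [Sym2.eq_iff] at he
      rcases he with ⟨rfl, rfl⟩ | ⟨rfl, rfl⟩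
      · exact Or.inl (Reachable.refl _)
      · exact Or.inr (Reachable.refl _)
    · have hadj : (G.deleteEdges {s(a,b)}).Adj x y := by
        simp only [deleteEdges_adj, Set.mem_singleton_iff]
        exact ⟨h, he⟩
      rcases hy with hy | hy
      · exact Or.inl (hy.trans hadj.symm.reachable)
      · exact Or.inr (hy.trans hadj.symm.reachable)

lemma stmt13_tree_path_edge_separates {V : Type*} {G : SimpleGraph V} (hG : G.IsTree) {u v : V}
    {pth : G.Walk u v} (hp : pth.IsPath) {e : Sym2 V} (he : e ∈ pth.edges) :
    ¬ (G.deleteEdges {e}).Reachable u v := by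
  classical
  intro hr
  obtain ⟨w⟩ := hr
  have hsub : ∀ e' ∈ w.toPath.1.edges, e' ∈ G.edgeSet := by
    intro e' he'
    have := w.toPath.1.edges_subset_edgeSet he'
    rw [edgeSet_deleteEdges] at this
    exact this.1
  have htr : (w.toPath.1.transfer G hsub).IsPath := (w.toPath.2).transfer hsub
  have huniq := (hG.existsUnique_path u v).unique hp htr
  have : e ∈ (w.toPath.1.transfer G hsub).edges := by
    rw [← huniq]; exact he
  rw [SimpleGraph.Walk.edges_transfer] at this
  have := w.toPath.1.edges_subset_edgeSet this
  rw [edgeSet_deleteEdges] at this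
  exact this.2 rfl

lemma stmt13_connected_swap {V : Type*} {G : SimpleGraph V} {a b x y : V} (hconn : G.Connected)
    (hab : G.Adj a b) (hxyne : x ≠ y)
    (hax : (G.deleteEdges {s(a,b)}).Reachable a x)
    (hby : (G.deleteEdges {s(a,b)}).Reachable b y) :
    ((G.deleteEdges {s(a,b)}) ⊔ SimpleGraph.fromEdgeSet {s(x,y)}).Connected := by
  set H := G.deleteEdges {s(a,b)} with hH
  set T' := H ⊔ SimpleGraph.fromEdgeSet {s(x,y)} with hT'
  have hle : H ≤ T' := le_sup_left
  have hxyT' : T'.Adj x y :=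
    (sup_adj _ _ _ _).mpr (Or.inr ((SimpleGraph.fromEdgeSet_adj _).mpr ⟨rfl, hxyne⟩))
  have key : ∀ z, T'.Reachable x z := by
    intro z
    rcases stmt13_reach_side ((hconn z a).some)
      (Or.inl (Reachable.refl a)) with hz | hz
    · exact ((hax.symm.trans hz).mono hle)
    · exact (hxyT'.reachable.trans (((hby.symm.trans hz)).mono hle))
  haveI : Nonempty V := ⟨x⟩
  exact SimpleGraph.Connected.mk fun z w => ((key z).symm.trans (key w))

lemma stmt13_gibbs_congr {V : Type*} [Fintype V] [DecidableEq V] (β : ℝ) (ω : Sym2 V → ℝ)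
    {T : SimpleGraph V} {s : Finset (Sym2 V)} (h : T.edgeSet = ↑s) :
    treeGibbsWeight β ω T = ∏ e ∈ s, Real.exp (-β * ω e) := by
  rw [treeGibbsWeight]
  exact Finset.prod_congr (Finset.coe_injective (by rw [coe_edgeFinset, h])) fun _ _ => rfl

lemma stmt13_swap_lemma {V : Type*} [Fintype V] [DecidableEq V] (μ : MeasureTheory.Measure ℝ)
    (ω : Sym2 V → ℝ) (β p q : ℝ)
    (hβ : 0 ≤ β) (hpq : invCDF μ p ≤ invCDF μ q)
    {T : SimpleGraph V} (hT : T.IsTree)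
    {u v : V} (hreach : (openGraph μ ω p).Reachable u v)
    {pw : T.Walk u v} (hpw : pw.IsPath) {e : Sym2 V} (hepw : e ∈ pw.edges)
    (hheavy : invCDF μ q < ω e) :
    ∃ T' : SimpleGraph V, T'.IsTree ∧ ∃ g f : Sym2 V,
      T = (T'.deleteEdges {f}) ⊔ SimpleGraph.fromEdgeSet {g} ∧
      treeGibbsWeight β ω T ≤
        Real.exp (-β * (invCDF μ q - invCDF μ p)) * treeGibbsWeight β ω T' := by
  obtain ⟨a, b, rfl⟩ : ∃ a b, e = s(a,b) := Sym2.exists.mp ⟨e, rfl⟩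
  have hab : T.Adj a b := T.mem_edgeSet.mp (pw.edges_subset_edgeSet hepw)
  set H := T.deleteEdges {s(a,b)} with hH
  have hsep : ¬ H.Reachable u v := stmt13_tree_path_edge_separates hT hpw hepw
  obtain ⟨x, y, hxy, hPx, hPy⟩ :=
    stmt13_exists_crossing_adj hreach.some (fun z => H.Reachable u z) (Reachable.refl u) hsep
  obtain ⟨hxyne, hxylight⟩ : x ≠ y ∧ ω s(x, y) ≤ invCDF μ p := hxy
  have hfg : s(x,y) ≠ s(a,b) := by
    intro h
    rw [h] at hxylight
    linarith
  have hnadjH : ¬ H.Adj x y := fun h => hPy (hPx.trans h.reachable)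
  have hfT : s(x,y) ∉ T.edgeSet := by
    intro hmem
    apply hnadjH
    simp only [hH, deleteEdges_adj, Set.mem_singleton_iff]
    exact ⟨T.mem_edgeSet.mp hmem, hfg⟩
  have hnxy : ¬ H.Reachable x y := fun h => hPy (hPx.trans h)
  have hside : ∀ z, H.Reachable a z ∨ H.Reachable b z := by
    intro z
    exact stmt13_reach_side ((hT.isConnected z a).some) (Or.inl (Reachable.refl a))
  set T' := H ⊔ SimpleGraph.fromEdgeSet {s(x,y)} with hT'
  have hconn : T'.Connected := by
    rcases hside x with hax | hbx
    · rcases hside y with hay | hby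
      · exact absurd (hax.symm.trans hay) hnxy
      · exact stmt13_connected_swap hT.isConnected hab hxyne hax hby
    · rcases hside y with hay | hby
      · have hcs := stmt13_connected_swap (a := b) (b := a) (x := x) (y := y) hT.isConnected
          hab.symm hxyne (by rw [Sym2.eq_swap]; exact hbx) (by rw [Sym2.eq_swap]; exact hay)
        rw [← Sym2.eq_swap] at hcs
        exact hcs
      · exact absurd (hbx.symm.trans hby) hnxy
  have hacyc : T'.IsAcyclic := by
    intro z c hc
    by_cases hf : s(x,y) ∈ c.edges
    · have hcyc := (adj_and_reachable_delete_edges_iff_exists_cycle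
        (G := T') (v := x) (w := y)).mpr ⟨z, c, hc, hf⟩
      apply hnxy
      have hle2 : (T' \ SimpleGraph.fromEdgeSet {s(x,y)}) ≤ H := by
        intro a' b' h'
        rw [sdiff_adj] at h'
        rcases (sup_adj _ _ _ _).mp h'.1 with h1 | h1
        · exact h1
        · exact absurd h1 h'.2
      exact Reachable.mono hle2 hcyc.2
    · have hsub : ∀ e' ∈ c.edges, e' ∈ T.edgeSet := by
        intro e' he'
        have hm := c.edges_subset_edgeSet he'
        rw [hT', edgeSet_sup, hH, edgeSet_deleteEdges, edgeSet_fromEdgeSet] at hm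
        rcases hm with ⟨h1, _⟩ | ⟨h1, _⟩
        · exact h1
        · exact absurd (Set.mem_singleton_iff.mp h1 ▸ he') hf
      exact hT.IsAcyclic (c.transfer T hsub) (hc.transfer hsub)
  refine ⟨T', ⟨hconn, hacyc⟩, s(a,b), s(x,y), ?_, ?_⟩
  · ext a' b'
    simp only [hT', hH, sup_adj, deleteEdges_adj, SimpleGraph.fromEdgeSet_adj,
      Set.mem_singleton_iff]
    constructor
    · intro hTadj
      by_cases hge : s(a', b') = s(a, b)
      · exact Or.inr ⟨hge, hTadj.ne⟩
      · refine Or.inl ⟨Or.inl ⟨hTadj, hge⟩, ?_⟩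
        intro hf'
        exact hfT (hf' ▸ T.mem_edgeSet.mpr hTadj)
    · rintro (⟨h1 | h1, h2⟩ | ⟨h1, hne⟩)
      · exact h1.1
      · exact absurd h1.1 h2
      · have : s(a', b') ∈ T.edgeSet := by rw [h1]; exact T.mem_edgeSet.mpr hab
        exact T.mem_edgeSet.mp this
  · have hgmem : s(a,b) ∈ T.edgeFinset := mem_edgeFinset.mpr (T.mem_edgeSet.mpr hab)
    have hfnotin : s(x,y) ∉ T.edgeFinset.erase (s(a,b)) := fun h =>
      hfT (mem_edgeFinset.mp (Finset.erase_subset _ _ h))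
    have hfd : ¬ (s(x,y) : Sym2 V).IsDiag := by rw [Sym2.mk_isDiag_iff]; exact hxyne
    have hsetT : T.edgeSet = ↑(insert (s(a,b)) (T.edgeFinset.erase (s(a,b)))) := by
      rw [Finset.insert_erase hgmem, coe_edgeFinset]
    have hsetT' : T'.edgeSet = ↑(insert (s(x,y)) (T.edgeFinset.erase (s(a,b)))) := by
      rw [hT', hH]
      ext e'
      simp only [edgeSet_sup, edgeSet_deleteEdges, edgeSet_fromEdgeSet, Set.mem_union,
        Set.mem_diff, Set.mem_singleton_iff, Set.mem_setOf_eq, Finset.coe_insert,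
        Set.mem_insert_iff, Finset.coe_erase, Finset.mem_coe, mem_edgeFinset]
      constructor
      · rintro (⟨h1, h2⟩ | ⟨rfl, h2⟩)
        · exact Or.inr ⟨h1, h2⟩
        · exact Or.inl rfl
      · rintro (rfl | ⟨h1, h2⟩)
        · exact Or.inr ⟨rfl, hfd⟩
        · exact Or.inl ⟨h1, h2⟩
    have hW : (0:ℝ) < ∏ e' ∈ T.edgeFinset.erase (s(a,b)), Real.exp (-β * ω e') :=
      Finset.prod_pos fun _ _ => Real.exp_pos _
    have hwT : treeGibbsWeight β ω T
        = Real.exp (-β * ω s(a,b)) * ∏ e' ∈ T.edgeFinset.erase (s(a,b)), Real.exp (-β * ω e') := by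
      rw [stmt13_gibbs_congr β ω hsetT, Finset.prod_insert (Finset.notMem_erase _ _)]
    have hwT' : treeGibbsWeight β ω T'
        = Real.exp (-β * ω s(x,y)) * ∏ e' ∈ T.edgeFinset.erase (s(a,b)), Real.exp (-β * ω e') := by
      rw [stmt13_gibbs_congr β ω hsetT', Finset.prod_insert hfnotin]
    rw [hwT, hwT', ← mul_assoc]
    apply mul_le_mul_of_nonneg_right _ hW.le
    rw [← Real.exp_add, Real.exp_le_exp]
    have h1 : β * (invCDF μ q - invCDF μ p + ω s(x,y)) ≤ β * ω s(a,b) := by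
      apply mul_le_mul_of_nonneg_left _ hβ
      linarith
    nlinarith [h1]

lemma stmt13_treeGibbsWeight_pos {V : Type*} [Fintype V] [DecidableEq V] (β : ℝ)
    (ω : Sym2 V → ℝ) (T : SimpleGraph V) : 0 < treeGibbsWeight β ω T :=
  Finset.prod_pos fun _ _ => Real.exp_pos _

lemma stmt13_quenchedP_le_of_swap {V : Type*} [Fintype V] [DecidableEq V] (β : ℝ)
    (ω : Sym2 V → ℝ) (A : Set (SimpleGraph V)) (c : ℝ) (hc : 0 ≤ c)
    (hswap : ∀ T : SimpleGraph V, IsSpanningTree ⊤ T → T ∈ A →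
      ∃ T' : SimpleGraph V, T'.IsTree ∧ ∃ g f : Sym2 V,
        T = (T'.deleteEdges {f}) ⊔ SimpleGraph.fromEdgeSet {g} ∧
        treeGibbsWeight β ω T ≤ c * treeGibbsWeight β ω T') :
    quenchedP (⊤ : SimpleGraph V) β ω A ≤ ((Fintype.card (Sym2 V) : ℝ))^2 * c := by
  rw [quenchedP]
  set S := univ.filter (fun T : SimpleGraph V => IsSpanningTree ⊤ T ∧ T ∈ A) with hS
  set D := univ.filter (fun T : SimpleGraph V => IsSpanningTree ⊤ T) with hD
  have hSD : S ⊆ D := by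
    intro T hT
    rw [hS, Finset.mem_filter] at hT
    rw [hD, Finset.mem_filter]
    exact ⟨hT.1, hT.2.1⟩
  have h0 : ∀ T : SimpleGraph V, (0:ℝ) ≤ treeGibbsWeight β ω T :=
    fun T => (stmt13_treeGibbsWeight_pos β ω T).le
  rcases S.eq_empty_or_nonempty with hSe | hSne
  · rw [hSe, Finset.sum_empty, zero_div]
    positivity
  · obtain ⟨T0, hT0⟩ := hSne
    have hT0' := (Finset.mem_filter.mp hT0).2
    haveI : Nonempty V := hT0'.1.2.isConnected.nonempty
    inhabit V
    have hkey : ∀ T : SimpleGraph V, ∃ x : SimpleGraph V × Sym2 V × Sym2 V, T ∈ S →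
        (x.1 ∈ D ∧ T = (x.1.deleteEdges {x.2.2}) ⊔ SimpleGraph.fromEdgeSet {x.2.1} ∧
          treeGibbsWeight β ω T ≤ c * treeGibbsWeight β ω x.1) := by
      intro T
      by_cases hT : T ∈ S
      · have hT' := (Finset.mem_filter.mp hT).2
        obtain ⟨T', hT'tree, g, f, hrec, hw⟩ := hswap T hT'.1 hT'.2
        exact ⟨(T', g, f), fun _ =>
          ⟨Finset.mem_filter.mpr ⟨Finset.mem_univ _, le_top, hT'tree⟩, hrec, hw⟩⟩
      · exact ⟨(T, s(default, default), s(default, default)), fun h => absurd h hT⟩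
    choose Φ hΦ using hkey
    have hinj : ∀ T1 ∈ S, ∀ T2 ∈ S, Φ T1 = Φ T2 → T1 = T2 := by
      intro T1 h1 T2 h2 heq
      rw [(hΦ T1 h1).2.1, (hΦ T2 h2).2.1, heq]
    have hden : (0:ℝ) < ∑ T ∈ D, treeGibbsWeight β ω T :=
      Finset.sum_pos (fun T _ => stmt13_treeGibbsWeight_pos β ω T) (⟨T0, hSD hT0⟩)
    have hchain : (∑ T ∈ S, treeGibbsWeight β ω T)
        ≤ c * ((Fintype.card (Sym2 V) : ℝ))^2 * ∑ T ∈ D, treeGibbsWeight β ω T := by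
      calc ∑ T ∈ S, treeGibbsWeight β ω T
          ≤ ∑ T ∈ S, c * treeGibbsWeight β ω (Φ T).1 :=
            Finset.sum_le_sum fun T hT => (hΦ T hT).2.2
        _ = c * ∑ T ∈ S, treeGibbsWeight β ω (Φ T).1 := by rw [Finset.mul_sum]
        _ = c * ∑ x ∈ S.image Φ, treeGibbsWeight β ω x.1 := by
            rw [Finset.sum_image hinj]
        _ ≤ c * ∑ x ∈ D ×ˢ (univ : Finset (Sym2 V × Sym2 V)), treeGibbsWeight β ω x.1 := by
            apply mul_le_mul_of_nonneg_left _ hc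
            apply Finset.sum_le_sum_of_subset_of_nonneg
            · intro x hx
              obtain ⟨T, hT, rfl⟩ := Finset.mem_image.mp hx
              exact Finset.mem_product.mpr ⟨(hΦ T hT).1, Finset.mem_univ _⟩
            · intro x _ _
              exact h0 x.1
        _ = c * ((Fintype.card (Sym2 V) : ℝ))^2 * ∑ T ∈ D, treeGibbsWeight β ω T := by
            rw [Finset.sum_product]
            simp only [Finset.sum_const, Finset.card_univ, Fintype.card_prod, nsmul_eq_mul]
            rw [← Finset.mul_sum, Nat.cast_mul]
            ring
    rw [div_le_iff₀ hden]
    calc (∑ T ∈ S, treeGibbsWeight β ω T)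
        ≤ c * ((Fintype.card (Sym2 V) : ℝ))^2 * ∑ T ∈ D, treeGibbsWeight β ω T := hchain
      _ = ((Fintype.card (Sym2 V) : ℝ))^2 * c * ∑ T ∈ D, treeGibbsWeight β ω T := by ring

lemma stmt13_quenched_bound {V : Type*} [Fintype V] [DecidableEq V] (μ : MeasureTheory.Measure ℝ)
    (ω : Sym2 V → ℝ) (β p q : ℝ) (hβ : 0 ≤ β) (hpq : invCDF μ p ≤ invCDF μ q) :
    quenchedP (⊤ : SimpleGraph V) β ω
      {T : SimpleGraph V | ∃ u v : V, u ≠ v ∧ (openGraph μ ω p).Reachable u v ∧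
        ∃ qq : T.Walk u v, qq.IsPath ∧ ∃ e ∈ qq.edges, invCDF μ q < ω e}
    ≤ ((Fintype.card (Sym2 V) : ℝ))^2 * Real.exp (-β * (invCDF μ q - invCDF μ p)) := by
  apply stmt13_quenchedP_le_of_swap _ _ _ _ (Real.exp_pos _).le
  intro T hTsp hTA
  obtain ⟨u, v, -, hreach, qq, hqq, e, he, hheavy⟩ := hTA
  exact stmt13_swap_lemma μ ω β p q hβ hpq hTsp.2 hreach hqq he hheavy

lemma stmt13_quenchedP_nonneg {V : Type*} [Fintype V] [DecidableEq V] (G : SimpleGraph V)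
    (β : ℝ) (ω : Sym2 V → ℝ) (A : Set (SimpleGraph V)) : 0 ≤ quenchedP G β ω A := by
  rw [quenchedP]
  apply div_nonneg <;>
    exact Finset.sum_nonneg fun T _ => (stmt13_treeGibbsWeight_pos β ω T).le

lemma stmt13_quenchedP_le_one {V : Type*} [Fintype V] [DecidableEq V] (G : SimpleGraph V)
    (β : ℝ) (ω : Sym2 V → ℝ) (A : Set (SimpleGraph V)) : quenchedP G β ω A ≤ 1 := by
  rw [quenchedP]
  apply div_le_one_of_le₀
  · apply Finset.sum_le_sum_of_subset_of_nonneg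
    · intro T hT
      rw [Finset.mem_filter] at hT ⊢
      exact ⟨hT.1, hT.2.1⟩
    · exact fun T _ _ => (stmt13_treeGibbsWeight_pos β ω T).le
  · exact Finset.sum_nonneg fun T _ => (stmt13_treeGibbsWeight_pos β ω T).le

lemma stmt13_avgP_le {V : Type*} [Fintype V] [DecidableEq V] (μ : MeasureTheory.Measure ℝ)
    [MeasureTheory.IsProbabilityMeasure μ] (G : SimpleGraph V) (β : ℝ)
    (A : (Sym2 V → ℝ) → Set (SimpleGraph V)) {C : ℝ}
    (hC : ∀ ω : Sym2 V → ℝ, quenchedP G β ω (A ω) ≤ C) :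
    avgP μ G β A ≤ C := by
  haveI : MeasureTheory.IsProbabilityMeasure (envMeasure μ : Measure (Sym2 V → ℝ)) := by
    rw [envMeasure]; infer_instance
  have hnorm := MeasureTheory.norm_integral_le_of_norm_le_const
    (μ := (envMeasure μ : Measure (Sym2 V → ℝ)))
    (f := fun ω => quenchedP G β ω (A ω)) (C := C)
    (Filter.Eventually.of_forall fun ω => by
      rw [Real.norm_eq_abs, abs_of_nonneg (stmt13_quenchedP_nonneg G β ω (A ω))]
      exact hC ω)
  rw [show (envMeasure μ : Measure (Sym2 V → ℝ)).real Set.univ = 1 by simp, mul_one] at hnorm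
  calc avgP μ G β A ≤ ‖avgP μ G β A‖ := le_abs_self _
    _ ≤ C := hnorm

lemma stmt13_rpow_sub_rpow_ge {α : ℝ} (hα : 0 < α) {a b : ℝ} (ha : 0 ≤ a) (hab : a ≤ b)
    (hb : b ≤ 1/2) :
    (2 / (3*α)) * (b - a) ≤ (1+b) ^ (1/α) - (1+a) ^ (1/α) := by
  have hγ : 0 < 1/α := by positivity
  set γ := 1/α with hγdef
  set X := (1+a) ^ γ with hX
  set Y := (1+b) ^ γ with hY
  have h1a : (1:ℝ) ≤ 1 + a := by linarith
  have h1b : (1:ℝ) ≤ 1 + b := by linarith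
  have hX1 : 1 ≤ X := by
    calc (1:ℝ) = 1 ^ γ := (Real.one_rpow γ).symm
      _ ≤ X := Real.rpow_le_rpow zero_le_one h1a hγ.le
  have hY1 : 1 ≤ Y := by
    calc (1:ℝ) = 1 ^ γ := (Real.one_rpow γ).symm
      _ ≤ Y := Real.rpow_le_rpow zero_le_one h1b hγ.le
  have hXY : X ≤ Y := Real.rpow_le_rpow (by linarith) (by linarith) hγ.le
  have hXle : X ≤ (3/2:ℝ) ^ γ := Real.rpow_le_rpow (by linarith) (by linarith) hγ.le
  have hYle : Y ≤ (3/2:ℝ) ^ γ := Real.rpow_le_rpow (by linarith) (by linarith) hγ.le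
  set s : Set ℝ := Set.Icc (1:ℝ) ((3/2:ℝ) ^ γ) with hs
  have hderiv : ∀ x ∈ s, HasDerivWithinAt (fun x : ℝ => x ^ α) (α * x ^ (α-1)) s x := by
    intro x hx
    exact (Real.hasDerivAt_rpow_const (Or.inl (by
      have : (0:ℝ) < x := lt_of_lt_of_le one_pos hx.1
      exact this.ne'))).hasDerivWithinAt
  have hbound : ∀ x ∈ s, ‖α * x ^ (α-1)‖ ≤ α * (3/2) := by
    intro x hx
    have hx0 : (0:ℝ) < x := lt_of_lt_of_le one_pos hx.1
    rw [Real.norm_eq_abs, abs_of_nonneg (by positivity)]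
    apply mul_le_mul_of_nonneg_left _ hα.le
    rcases le_or_gt α 1 with hα1 | hα1
    · have : x ^ (α-1) ≤ 1 := Real.rpow_le_one_of_one_le_of_nonpos hx.1 (by linarith)
      linarith
    · have h1 : x ^ (α-1) ≤ ((3/2:ℝ) ^ γ) ^ (α-1) :=
        Real.rpow_le_rpow hx0.le hx.2 (by linarith)
      have h2 : ((3/2:ℝ) ^ γ) ^ (α-1) = (3/2:ℝ) ^ (γ * (α-1)) := by
        rw [← Real.rpow_mul (by norm_num : (0:ℝ) ≤ 3/2)]
      have h3 : γ * (α - 1) = 1 - γ := by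
        rw [hγdef]; field_simp
      have h4 : (3/2:ℝ) ^ (1 - γ) ≤ (3/2:ℝ) ^ (1:ℝ) :=
        Real.rpow_le_rpow_of_exponent_le (by norm_num) (by linarith)
      rw [Real.rpow_one] at h4
      rw [h2, h3] at h1
      linarith
  have hXs : X ∈ s := ⟨hX1, hXle⟩
  have hYs : Y ∈ s := ⟨hY1, hYle⟩
  have hmvt := (convex_Icc (1:ℝ) ((3/2:ℝ) ^ γ)).norm_image_sub_le_of_norm_hasDerivWithin_le
    hderiv hbound hXs hYs
  have hXα : X ^ α = 1 + a := by
    rw [hX, ← Real.rpow_mul (by linarith), hγdef, one_div_mul_cancel hα.ne', Real.rpow_one]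
  have hYα : Y ^ α = 1 + b := by
    rw [hY, ← Real.rpow_mul (by linarith), hγdef, one_div_mul_cancel hα.ne', Real.rpow_one]
  rw [Real.norm_eq_abs, Real.norm_eq_abs, hXα, hYα] at hmvt
  rw [abs_of_nonneg (by linarith), abs_of_nonneg (by linarith)] at hmvt
  have hba : b - a ≤ α * (3/2) * (Y - X) := by linarith
  have hmul := mul_le_mul_of_nonneg_left hba (le_of_lt (show (0:ℝ) < 2/(3*α) by positivity))
  have heq : (2/(3*α)) * (α * (3/2) * (Y - X)) = Y - X := by
    field_simp
  linarith [hmul, heq.le, heq.ge]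

lemma stmt13_invCDF_formula (μ : MeasureTheory.Measure ℝ) {α cμ ρ : ℝ} (hα : 0 < α)
    (h0 : μ (Set.Iio 0) = 0) (hcμ : 0 < cμ) (hρ : 0 < ρ)
    (hF : ∀ t : ℝ, 0 ≤ t → t ≤ ρ → (μ (Set.Iic t)).toReal = cμ * t ^ α)
    {s : ℝ} (hs0 : 0 < s) (hsρ : s ≤ cμ * ρ ^ α) :
    invCDF μ s = (s / cμ) ^ (1/α) := by
  rw [invCDF]
  set t0 := (s / cμ) ^ (1/α) with ht0
  have hsc : 0 < s / cμ := div_pos hs0 hcμ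
  have ht0pos : 0 < t0 := Real.rpow_pos_of_pos hsc _
  have ht0ρ : t0 ≤ ρ := by
    have h1 : s / cμ ≤ ρ ^ α := (div_le_iff₀ hcμ).mpr (by rwa [mul_comm])
    calc t0 ≤ (ρ^α)^(1/α) := Real.rpow_le_rpow hsc.le h1 (by positivity)
      _ = ρ := by rw [← Real.rpow_mul hρ.le, mul_one_div_cancel hα.ne', Real.rpow_one]
  have ht0α : t0 ^ α = s / cμ := by
    rw [ht0, ← Real.rpow_mul hsc.le, one_div_mul_cancel hα.ne', Real.rpow_one]
  have ht0val : (μ (Set.Iic t0)).toReal = s := by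
    rw [hF t0 ht0pos.le ht0ρ, ht0α]
    field_simp
  have hmem : t0 ∈ {t : ℝ | s ≤ (μ (Set.Iic t)).toReal} := by
    rw [Set.mem_setOf_eq, ht0val]
  have hlb : ∀ r ∈ {t : ℝ | s ≤ (μ (Set.Iic t)).toReal}, t0 ≤ r := by
    intro r hr
    by_contra hcon
    push_neg at hcon
    rw [Set.mem_setOf_eq] at hr
    rcases lt_or_ge r 0 with hr0 | hr0
    · have hle : μ (Set.Iic r) ≤ μ (Set.Iio 0) :=
        measure_mono (fun z hz => lt_of_le_of_lt hz hr0)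
      rw [h0, le_zero_iff] at hle
      rw [hle] at hr
      simp at hr
      linarith
    · have hFr : (μ (Set.Iic r)).toReal = cμ * r ^ α := hF r hr0 (by linarith)
      have h2 : cμ * r ^ α < cμ * t0 ^ α :=
        mul_lt_mul_of_pos_left (Real.rpow_lt_rpow hr0 hcon hα) hcμ
      rw [ht0α] at h2
      rw [hFr] at hr
      have : cμ * (s / cμ) = s := by field_simp
      linarith
  exact le_antisymm (csInf_le ⟨t0, hlb⟩ hmem) (le_csInf ⟨t0, hmem⟩ hlb)

lemma stmt13_card_sym2_le (n : ℕ) : (Fintype.card (Sym2 (Fin n)) : ℝ) ≤ (n:ℝ)^2 := by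
  have hs : Function.Surjective (fun p : Fin n × Fin n => s(p.1, p.2)) := by
    intro z
    induction z using Sym2.ind with
    | _ x y => exact ⟨(x,y), rfl⟩
  have hcard := Fintype.card_le_of_surjective _ hs
  rw [Fintype.card_prod, Fintype.card_fin] at hcard
  calc (Fintype.card (Sym2 (Fin n)) : ℝ) ≤ ((n*n : ℕ) : ℝ) := by exact_mod_cast hcard
    _ = (n:ℝ)^2 := by push_cast; ring

end Stmt13Aux

/-- gap in edge weights. -/
theorem stmt_13 (μ : Measure ℝ) [IsProbabilityMeasure μ] (α : ℝ)
    (hA : AssumptionA μ α) (β ε t : ℕ → ℝ)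
    (hβ : ∀ n, 0 ≤ β n)
    (hε : Filter.Tendsto ε Filter.atTop (nhds 0))
    (ht : ∀ n, 1 ≤ t n)
    (htε : Filter.Tendsto (fun n => t n * ε n) Filter.atTop (nhds 0)) :
    ∃ cg > (0:ℝ),
      ∀ᶠ n : ℕ in Filter.atTop,
        avgP μ (⊤ : SimpleGraph (Fin n)) (β n) (fun ω =>
            {T : SimpleGraph (Fin n) |
              ∃ u v : Fin n, u ≠ v ∧
                (openGraph μ ω ((1 + ε n) / n)).Reachable u v ∧
                ∃ q : T.Walk u v, q.IsPath ∧
                  ∃ e ∈ q.edges, invCDF μ ((1 + t n * ε n) / n) < ω e})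
          ≤ (n : ℝ) ^ 5 *
              Real.exp (-cg * (t n - 1) * β n * ε n / (n : ℝ) ^ (1 / α)) := by
  obtain ⟨hα, h0, cμ, hcμ, ρ, hρ, hF⟩ := hA
  have hcg : 0 < (2/(3*α)) / cμ ^ (1/α) := by positivity
  refine ⟨(2/(3*α)) / cμ ^ (1/α), hcg, ?_⟩
  set cg := (2/(3*α)) / cμ ^ (1/α) with hcgdef
  have hρα : 0 < cμ * ρ ^ α := by positivity
  have hev1 : ∀ᶠ n : ℕ in Filter.atTop, |ε n| < 1/2 := by
    have := Metric.tendsto_nhds.mp hε (1/2) (by norm_num)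
    simpa [Real.dist_eq] using this
  have hev2 : ∀ᶠ n : ℕ in Filter.atTop, |t n * ε n| < 1/2 := by
    have := Metric.tendsto_nhds.mp htε (1/2) (by norm_num)
    simpa [Real.dist_eq, abs_mul] using this
  have hev3 : ∀ᶠ n : ℕ in Filter.atTop, (3/2 : ℝ) / n ≤ cμ * ρ ^ α := by
    filter_upwards [Filter.eventually_ge_atTop (max 1 ⌈(3/2) / (cμ * ρ ^ α)⌉₊)] with n hn
    have hn1 : 1 ≤ n := le_trans (le_max_left _ _) hn
    have hnc : ((3/2) / (cμ * ρ ^ α) : ℝ) ≤ n :=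
      le_trans (Nat.le_ceil _) (by exact_mod_cast le_trans (le_max_right _ _) hn)
    have hnpos : (0:ℝ) < n := by exact_mod_cast hn1
    rw [div_le_iff₀ hnpos]
    calc (3/2 : ℝ) = ((3/2)/(cμ*ρ^α)) * (cμ*ρ^α) := by field_simp
      _ ≤ (n:ℝ) * (cμ*ρ^α) := mul_le_mul_of_nonneg_right hnc hρα.le
      _ = cμ * ρ ^ α * n := by ring
  filter_upwards [hev1, hev2, hev3, Filter.eventually_ge_atTop 1] with n hεb htεb hnρ hn1
  have hn0 : (0:ℝ) < n := by exact_mod_cast hn1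
  have hn1R : (1:ℝ) ≤ n := by exact_mod_cast hn1
  have hnγpos : (0:ℝ) < (n:ℝ) ^ (1/α) := Real.rpow_pos_of_pos hn0 _
  rcases le_or_gt 0 (ε n) with hε0 | hε0
  · -- main case : 0 ≤ ε n
    set p' := (1 + ε n) / (n:ℝ) with hp'def
    set q' := (1 + t n * ε n) / (n:ℝ) with hq'def
    have htn := ht n
    have hεte : ε n ≤ t n * ε n := le_mul_of_one_le_left hε0 htn
    have htε2 : t n * ε n ≤ 1/2 := (abs_lt.mp htεb).2.le
    have htε0 : 0 ≤ t n * ε n := le_trans hε0 hεte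
    have hp0 : 0 < p' := div_pos (by linarith) hn0
    have hq0 : 0 < q' := div_pos (by linarith) hn0
    have hpq' : p' ≤ q' := by
      rw [hp'def, hq'def]
      gcongr
    have hqρ : q' ≤ cμ * ρ ^ α := by
      refine le_trans ?_ hnρ
      rw [hq'def]
      gcongr
      linarith
    have hpρ : p' ≤ cμ * ρ ^ α := hpq'.trans hqρ
    have hinvp : invCDF μ p' = (p'/cμ) ^ (1/α) :=
      stmt13_invCDF_formula μ hα h0 hcμ hρ hF hp0 hpρ
    have hinvq : invCDF μ q' = (q'/cμ) ^ (1/α) :=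
      stmt13_invCDF_formula μ hα h0 hcμ hρ hF hq0 hqρ
    have hpqinv : invCDF μ p' ≤ invCDF μ q' := by
      rw [hinvp, hinvq]
      apply Real.rpow_le_rpow (by positivity) _ (by positivity)
      gcongr
    have hkey := stmt13_rpow_sub_rpow_ge hα hε0 hεte htε2
    have hfrac : ∀ s : ℝ, 0 ≤ s → ((s / (n:ℝ)) / cμ) ^ (1/α)
        = s ^ (1/α) / ((n:ℝ)*cμ) ^ (1/α) := by
      intro s hs
      rw [div_div, Real.div_rpow hs (by positivity)]
    have hncμpos : (0:ℝ) < ((n:ℝ)*cμ) ^ (1/α) := by positivity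
    have hΔ : cg * (t n - 1) * ε n / (n:ℝ) ^ (1/α) ≤ invCDF μ q' - invCDF μ p' := by
      rw [hinvp, hinvq, hp'def, hq'def, hfrac _ (by linarith), hfrac _ (by linarith),
        div_sub_div_same]
      have hLHS : cg * (t n - 1) * ε n / (n:ℝ) ^ (1/α)
          = (2/(3*α)) * (t n * ε n - ε n) / ((n:ℝ)*cμ) ^ (1/α) := by
        rw [hcgdef, Real.mul_rpow hn0.le hcμ.le]
        have hcne : (cμ:ℝ) ^ (1/α) ≠ 0 := (Real.rpow_pos_of_pos hcμ _).ne'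
        have hnne : ((n:ℝ)) ^ (1/α) ≠ 0 := hnγpos.ne'
        field_simp
      rw [hLHS]
      gcongr
    have havg : avgP μ (⊤ : SimpleGraph (Fin n)) (β n) (fun ω =>
          {T : SimpleGraph (Fin n) |
            ∃ u v : Fin n, u ≠ v ∧
              (openGraph μ ω p').Reachable u v ∧
              ∃ q : T.Walk u v, q.IsPath ∧
                ∃ e ∈ q.edges, invCDF μ q' < ω e})
        ≤ ((Fintype.card (Sym2 (Fin n)) : ℝ))^2
            * Real.exp (-(β n) * (invCDF μ q' - invCDF μ p')) :=
      stmt13_avgP_le μ _ _ _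
        (fun ω => stmt13_quenched_bound μ ω (β n) p' q' (hβ n) hpqinv)
    refine le_trans havg ?_
    have hexp : Real.exp (-(β n) * (invCDF μ q' - invCDF μ p'))
        ≤ Real.exp (-cg * (t n - 1) * β n * ε n / (n:ℝ) ^ (1/α)) := by
      rw [Real.exp_le_exp]
      have hb := mul_le_mul_of_nonneg_left hΔ (hβ n)
      have hre : -cg * (t n - 1) * β n * ε n / (n:ℝ) ^ (1/α)
          = -(β n * (cg * (t n - 1) * ε n / (n:ℝ) ^ (1/α))) := by ring
      rw [hre]
      linarith
    have hcard : ((Fintype.card (Sym2 (Fin n)) : ℝ))^2 ≤ (n:ℝ)^5 := by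
      have h1 := stmt13_card_sym2_le n
      have h2 : (0:ℝ) ≤ (Fintype.card (Sym2 (Fin n)) : ℝ) := Nat.cast_nonneg _
      calc ((Fintype.card (Sym2 (Fin n)) : ℝ))^2 ≤ ((n:ℝ)^2)^2 := pow_le_pow_left₀ h2 h1 2
        _ = (n:ℝ)^4 := by ring
        _ ≤ (n:ℝ)^5 := pow_le_pow_right₀ hn1R (by norm_num)
    exact mul_le_mul hcard hexp (Real.exp_pos _).le (by positivity)
  · -- case ε n < 0
    have havg : avgP μ (⊤ : SimpleGraph (Fin n)) (β n) (fun ω =>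
          {T : SimpleGraph (Fin n) |
            ∃ u v : Fin n, u ≠ v ∧
              (openGraph μ ω ((1 + ε n) / n)).Reachable u v ∧
              ∃ q : T.Walk u v, q.IsPath ∧
                ∃ e ∈ q.edges, invCDF μ ((1 + t n * ε n) / n) < ω e}) ≤ 1 :=
      stmt13_avgP_le μ _ _ _ (fun ω => stmt13_quenchedP_le_one _ _ _ _)
    refine le_trans havg ?_
    have hxpos : 0 ≤ -cg * (t n - 1) * β n * ε n / (n:ℝ) ^ (1/α) := by
      apply div_nonneg _ hnγpos.le
      have h1 : 0 ≤ cg * (t n - 1) * β n * (-ε n) :=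
        mul_nonneg (mul_nonneg (mul_nonneg hcg.le (by linarith [ht n])) (hβ n)) (by linarith)
      nlinarith [h1]
    have hexp1 : (1:ℝ) ≤ Real.exp (-cg * (t n - 1) * β n * ε n / (n:ℝ) ^ (1/α)) := by
      have := Real.add_one_le_exp (-cg * (t n - 1) * β n * ε n / (n:ℝ) ^ (1/α))
      linarith
    have h15 : (1:ℝ) ≤ (n:ℝ)^5 := by
      calc (1:ℝ) = 1^5 := by norm_num
        _ ≤ (n:ℝ)^5 := pow_le_pow_left₀ zero_le_one hn1R 5
    calc (1:ℝ) = 1 * 1 := by ring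
      _ ≤ (n:ℝ)^5 * Real.exp (-cg * (t n - 1) * β n * ε n / (n:ℝ) ^ (1/α)) :=
        mul_le_mul h15 hexp1 zero_le_one (le_trans zero_le_one h15)
end
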